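/- Let H, H' be Hilbert spaces, K : H → H' a compact injective linear operator with dense range. Then for every f ∈ H', the Tikhonov approximations φ_α = (αI + K*K)⁻¹K*f satisfy ‖Kφ_α − f‖ → 0 as α → 0⁺. -/

import Mathlib

open scoped InnerProductSpace ComplexConjugate

/-- Minimization property from the normal equation. -/
lemma tikhonov_min {H H' : Type*}
    [NormedAddCommGroup H] [InnerProductSpace ℂ H] [CompleteSpace H]
    [NormedAddCommGroup H'] [InnerProductSpace ℂ H'] [CompleteSpace H']
    (K : H →L[ℂ] H') (f : H') {α : ℝ} (hα : 0 < α) {g : H}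
    (hg : (α : ℂ) • g + (ContinuousLinearMap.adjoint K) (K g)
        = (ContinuousLinearMap.adjoint K) f) (ψ : H) :
    ‖K g - f‖ ^ 2 ≤ ‖K ψ - f‖ ^ 2 + α * ‖ψ‖ ^ 2 := by
  set e := ψ - g with he
  have hψ : ψ = g + e := by simp [he]
  have hcross : Complex.re ⟪K g - f, K e⟫_ℂ + α * Complex.re ⟪g, e⟫_ℂ = 0 := by
    have h1 : ⟪K g - f, K e⟫_ℂ = ⟪(ContinuousLinearMap.adjoint K) (K g - f), e⟫_ℂ := by
      rw [ContinuousLinearMap.adjoint_inner_left]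
    have h2 : (α : ℝ) * Complex.re ⟪g, e⟫_ℂ = Complex.re ⟪(α : ℂ) • g, e⟫_ℂ := by
      rw [inner_smul_left]
      simp
    rw [h1, h2, ← Complex.add_re, ← inner_add_left]
    have h3 : (ContinuousLinearMap.adjoint K) (K g - f) + (α : ℂ) • g = 0 := by
      rw [map_sub]
      rw [← hg]
      abel
    rw [h3, inner_zero_left]
    simp
  have hKψ : ‖K ψ - f‖ ^ 2
      = ‖K g - f‖ ^ 2 + 2 * Complex.re ⟪K g - f, K e⟫_ℂ + ‖K e‖ ^ 2 := by
    have : K ψ - f = (K g - f) + K e := by rw [hψ, map_add]; abel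
    rw [this, @norm_add_sq ℂ]; rfl
  have hψn : ‖ψ‖ ^ 2 = ‖g‖ ^ 2 + 2 * Complex.re ⟪g, e⟫_ℂ + ‖e‖ ^ 2 := by
    rw [hψ, @norm_add_sq ℂ]; rfl
  rw [hKψ, hψn]
  nlinarith [sq_nonneg ‖K e‖, sq_nonneg ‖e‖, sq_nonneg ‖g‖,
    mul_nonneg hα.le (sq_nonneg ‖e‖), mul_nonneg hα.le (sq_nonneg ‖g‖)]

/-- for `K` compact, injective, with dense range, the Tikhonov
approximations `φ_α = (αI + K*K)⁻¹K*f` (characterized by the normal equation)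
satisfy `‖Kφ_α − f‖ → 0` as `α → 0⁺`. -/
theorem stmt8 {H H' : Type*}
    [NormedAddCommGroup H] [InnerProductSpace ℂ H] [CompleteSpace H]
    [NormedAddCommGroup H'] [InnerProductSpace ℂ H'] [CompleteSpace H']
    (K : H →L[ℂ] H') (hcpt : IsCompactOperator K)
    (hinj : Function.Injective K) (hdense : DenseRange K)
    (f : H') (φ : ℝ → H)
    (hφ : ∀ α : ℝ, 0 < α →
      (α : ℂ) • φ α + (ContinuousLinearMap.adjoint K) (K (φ α))
        = (ContinuousLinearMap.adjoint K) f) :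
    Filter.Tendsto (fun α => ‖K (φ α) - f‖) (nhdsWithin 0 (Set.Ioi 0))
      (nhds 0) := by
  rw [Metric.tendsto_nhds]
  intro ε hε
  -- choose ψ with ‖K ψ - f‖ < ε/2
  obtain ⟨ψ, hψ⟩ := hdense.exists_dist_lt f (by positivity : (0:ℝ) < ε / 2)
  have hψ' : ‖K ψ - f‖ < ε / 2 := by
    rwa [dist_comm, dist_eq_norm] at hψ
  set δ : ℝ := ε ^ 2 / (2 * (‖ψ‖ ^ 2 + 1)) with hδdef
  have hδpos : 0 < δ := by positivity
  have : Set.Ioo (0:ℝ) δ ∈ nhdsWithin 0 (Set.Ioi 0) :=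
    Ioo_mem_nhdsGT_of_mem (Set.left_mem_Ico.mpr hδpos)
  filter_upwards [this] with α hα
  obtain ⟨hα0, hαδ⟩ := hα
  have hmin := tikhonov_min K f hα0 (hφ α hα0) ψ
  have h1 : ‖K ψ - f‖ ^ 2 < ε ^ 2 / 4 := by
    have := hψ'
    nlinarith [norm_nonneg (K ψ - f)]
  have h2 : α * ‖ψ‖ ^ 2 < ε ^ 2 / 2 := by
    have h3 : α * (‖ψ‖ ^ 2 + 1) < δ * (‖ψ‖ ^ 2 + 1) := by
      apply mul_lt_mul_of_pos_right hαδ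
      positivity
    have h4 : δ * (‖ψ‖ ^ 2 + 1) = ε ^ 2 / 2 := by
      rw [hδdef]
      field_simp
    nlinarith [sq_nonneg ‖ψ‖]
  have hlt : ‖K (φ α) - f‖ ^ 2 < ε ^ 2 := by nlinarith
  have : ‖K (φ α) - f‖ < ε := by
    nlinarith [norm_nonneg (K (φ α) - f)]
  simpa [Real.dist_eq, abs_of_nonneg (norm_nonneg _)] using this
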